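/- Fix an integer k ≥ 1 and φ ∈ (0,π]. A point λ₀ ∈ (0,1) is a local maximum point of the function λ ↦ P_k^φ(λ) on (0,1) if and only if there exists an integer j with 1 ≤ j ≤ k such that λ₀ = (1 − cos((2j−1)π/(2k+1)))/(1 − cos φ). -/

import Mathlib

/-- The success probability `P_k^φ(λ)` of the matched-phase Grover algorithm after
`k` iterations: `P_k^φ(λ) = A·cos((2k+1)δ) + B` where `θ = arcsin √λ`,
`δ = arccos (1 − λ(1 − cos φ))`, `A = (sin²θ/sin²δ)(cos φ − cos δ)` and
`B = (sin²θ/sin²δ)(1 − cos φ·cos δ)`. -/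
noncomputable def grovP (k : ℕ) (φ lam : ℝ) : ℝ :=
  let θ : ℝ := Real.arcsin (Real.sqrt lam)
  let δ : ℝ := Real.arccos (1 - lam * (1 - Real.cos φ))
  let A : ℝ := Real.sin θ ^ 2 / Real.sin δ ^ 2 * (Real.cos φ - Real.cos δ)
  let B : ℝ := Real.sin θ ^ 2 / Real.sin δ ^ 2 * (1 - Real.cos φ * Real.cos δ)
  A * Real.cos ((2 * (k : ℝ) + 1) * δ) + B

/-- `φ_k^min = arccos(1 − (2 − 2cos(π/(2k+1)))/(1 − cos(π/(2k−1))))`. -/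
noncomputable def phiMin (k : ℕ) : ℝ :=
  Real.arccos (1 - (2 - 2 * Real.cos (Real.pi / (2 * (k : ℝ) + 1))) /
    (1 - Real.cos (Real.pi / (2 * (k : ℝ) - 1))))


open Real Set Filter Topology

set_option maxHeartbeats 1000000

section GroverAux

noncomputable def Wf (m φ x : ℝ) : ℝ :=
  (Real.cos (2*x) - Real.cos φ) * Real.cos (m*x) ^ 2 / Real.cos x ^ 2

noncomputable def psiF (m φ x : ℝ) : ℝ :=
  -2*(1+Real.cos φ)*Real.tan x/(Real.cos (2*x) - Real.cos φ) - 2*m*Real.tan (m*x)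


lemma Wf_hasDeriv (m φ x : ℝ) (hC : Real.cos x ≠ 0) (hQ : Real.cos (m*x) ≠ 0)
    (hD : Real.cos (2*x) - Real.cos φ ≠ 0) :
    HasDerivAt (Wf m φ) (Wf m φ x * psiF m φ x) x := by
  have h2x : HasDerivAt (fun x : ℝ => 2*x) 2 x := by simpa using (hasDerivAt_id x).const_mul (2:ℝ)
  have hmx : HasDerivAt (fun x : ℝ => m*x) m x := by simpa using (hasDerivAt_id x).const_mul m
  have hu : HasDerivAt (fun x : ℝ => Real.cos (2*x) - Real.cos φ) (-Real.sin (2*x) * 2) x :=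
    (h2x.cos).sub_const _
  have hv : HasDerivAt (fun x : ℝ => Real.cos (m*x) ^ 2)
      ((2:ℕ) * Real.cos (m*x) ^ 1 * (-Real.sin (m*x) * m)) x := (hmx.cos).pow 2
  have hc2 : HasDerivAt (fun x : ℝ => Real.cos x ^ 2)
      ((2:ℕ) * Real.cos x ^ 1 * (-Real.sin x)) x := (Real.hasDerivAt_cos x).pow 2
  have hW := (hu.mul hv).div hc2 (pow_ne_zero 2 hC)
  refine HasDerivAt.congr_deriv (f := Wf m φ) hW ?_
  simp only [Pi.mul_apply]
  unfold Wf psiF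
  rw [Real.tan_eq_sin_div_cos, Real.tan_eq_sin_div_cos, Real.cos_two_mul, Real.sin_two_mul] at *
  field_simp
  ring

lemma psiF_anti (m φ : ℝ) (hm : 0 < m) (hφπ : φ ≤ π) (n : ℤ) {A B x y : ℝ}
    (hA : 0 ≤ A) (hB : B ≤ φ/2)
    (hbr : ∀ z ∈ Set.Ioo A B, m*z - n*Real.pi ∈ Set.Ioo (-(Real.pi/2)) (Real.pi/2))
    (hx : x ∈ Set.Ioo A B) (hy : y ∈ Set.Ioo A B) (hxy : x < y) :
    psiF m φ y < psiF m φ x := by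
  have hπ := Real.pi_pos
  have hx0 : 0 < x := lt_of_le_of_lt hA hx.1
  have hy0 : 0 < y := lt_of_le_of_lt hA hy.1
  have hyφ : y < φ/2 := lt_of_lt_of_le hy.2 hB
  have hxφ : x < φ/2 := hxy.trans hyφ
  have hφ2 : φ/2 ≤ π/2 := by linarith
  -- tan monotone
  have htanxy : Real.tan x < Real.tan y :=
    Real.tan_lt_tan_of_nonneg_of_lt_pi_div_two hx0.le (lt_of_lt_of_le hyφ hφ2) hxy
  have htanx : 0 < Real.tan x := Real.tan_pos_of_pos_of_lt_pi_div_two hx0 (by linarith)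
  -- denominators
  have hDy : 0 < Real.cos (2*y) - Real.cos φ := by
    have := Real.cos_lt_cos_of_nonneg_of_le_pi (by linarith : (0:ℝ) ≤ 2*y) hφπ (by linarith)
    linarith
  have hDxy : Real.cos (2*y) ≤ Real.cos (2*x) := by
    have := Real.cos_lt_cos_of_nonneg_of_le_pi (by linarith : (0:ℝ) ≤ 2*x)
      (by linarith : 2*y ≤ π) (by linarith)
    linarith
  have hfrac : Real.tan x / (Real.cos (2*x) - Real.cos φ)
      ≤ Real.tan y / (Real.cos (2*y) - Real.cos φ) := by
    rw [div_le_div_iff₀ (by linarith) hDy]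
    nlinarith
  have h1 : -2*(1+Real.cos φ)*Real.tan y/(Real.cos (2*y) - Real.cos φ)
      ≤ -2*(1+Real.cos φ)*Real.tan x/(Real.cos (2*x) - Real.cos φ) := by
    have hcφ : 0 ≤ 1 + Real.cos φ := by nlinarith [Real.neg_one_le_cos φ]
    rw [mul_div_assoc, mul_div_assoc]
    apply mul_le_mul_of_nonpos_left hfrac (by linarith)
  -- tan (m x) < tan (m y)
  have hmx := hbr x hx
  have hmy := hbr y hy
  have htx : Real.tan (m*x) = Real.tan (m*x - n*π) := (Real.tan_sub_int_mul_pi _ n).symm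
  have hty : Real.tan (m*y) = Real.tan (m*y - n*π) := (Real.tan_sub_int_mul_pi _ n).symm
  have h2 : Real.tan (m*x) < Real.tan (m*y) := by
    rw [htx, hty]
    exact Real.strictMonoOn_tan hmx hmy (by nlinarith)
  have h2' : 2*m*Real.tan (m*x) < 2*m*Real.tan (m*y) := by nlinarith
  unfold psiF
  linarith

lemma core (m φ : ℝ) (hm : 1 ≤ m) (hφ0 : 0 < φ) (hφπ : φ ≤ π) {x₀ : ℝ}
    (hx₀ : x₀ ∈ Set.Ioo 0 (φ/2)) (hQ0 : Real.cos (m*x₀) ≠ 0)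
    (hmin : IsLocalMinOn (Wf m φ) (Set.Ioo 0 (φ/2)) x₀) : False := by
  have hπ := Real.pi_pos
  have hm0 : (0:ℝ) < m := by linarith
  set n : ℤ := round (m*x₀/π) with hn
  -- strict branch bounds
  have hbr0 : |m*x₀/π - n| < 1/2 := by
    rcases lt_or_eq_of_le (abs_sub_round (m*x₀/π)) with h | h
    · exact h
    · exfalso
      rcases abs_eq (by norm_num : (0:ℝ) ≤ 1/2) |>.mp h with h' | h'
      · exact hQ0 (Real.cos_eq_zero_iff.mpr ⟨n, by field_simp at h' ⊢; linarith⟩)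
      · exact hQ0 (Real.cos_eq_zero_iff.mpr ⟨n-1, by push_cast; field_simp at h' ⊢; linarith⟩)
  have habs1 := (abs_lt.mp hbr0).1
  have habs2 := (abs_lt.mp hbr0).2
  have he : m*x₀ = (m*x₀/π)*π := (div_mul_cancel₀ _ hπ.ne').symm
  have hbr1 : (n:ℝ)*π - π/2 < m*x₀ := by
    have := mul_lt_mul_of_pos_right (by linarith : ((n:ℝ) - 1/2) < m*x₀/π) hπ
    nlinarith
  have hbr2 : m*x₀ < (n:ℝ)*π + π/2 := by
    have := mul_lt_mul_of_pos_right (by linarith : m*x₀/π < (n:ℝ) + 1/2) hπ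
    nlinarith
  set A : ℝ := max (((n:ℝ)*π - π/2)/m) 0 with hA
  set B : ℝ := min (((n:ℝ)*π + π/2)/m) (φ/2) with hB
  have hA0 : 0 ≤ A := le_max_right _ _
  have hBφ : B ≤ φ/2 := min_le_right _ _
  have hx₀AB : x₀ ∈ Set.Ioo A B :=
    ⟨max_lt ((div_lt_iff₀ hm0).mpr (by linarith)) hx₀.1,
     lt_min ((lt_div_iff₀ hm0).mpr (by linarith)) hx₀.2⟩
  have hsub : Set.Ioo A B ⊆ Set.Ioo 0 (φ/2) := fun z hz =>
    ⟨lt_of_le_of_lt hA0 hz.1, lt_of_lt_of_le hz.2 hBφ⟩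
  have hbranch : ∀ z ∈ Set.Ioo A B, m*z - (n:ℝ)*π ∈ Set.Ioo (-(π/2)) (π/2) := by
    intro z hz
    have h1 : ((n:ℝ)*π - π/2)/m < z := lt_of_le_of_lt (le_max_left _ _) hz.1
    have h2 : z < ((n:ℝ)*π + π/2)/m := lt_of_lt_of_le hz.2 (min_le_left _ _)
    rw [div_lt_iff₀ hm0] at h1
    rw [lt_div_iff₀ hm0] at h2
    constructor <;> nlinarith
  have hC : ∀ z ∈ Set.Ioo A B, 0 < Real.cos z := by
    intro z hz
    have := hsub hz
    exact Real.cos_pos_of_mem_Ioo ⟨by linarith [this.1], by linarith [this.2]⟩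
  have hQ : ∀ z ∈ Set.Ioo A B, Real.cos (m*z) ≠ 0 := by
    intro z hz
    have h1 : Real.cos ((m*z - n*π) + n*π) = (-1)^n * Real.cos (m*z - n*π) :=
      Real.cos_add_int_mul_pi _ n
    have h2 : 0 < Real.cos (m*z - n*π) := Real.cos_pos_of_mem_Ioo (hbranch z hz)
    have h3 : (m*z - (n:ℝ)*π) + n*π = m*z := by ring
    rw [h3] at h1
    rw [h1]
    exact mul_ne_zero (zpow_ne_zero _ (by norm_num)) h2.ne'
  have hD : ∀ z ∈ Set.Ioo A B, 0 < Real.cos (2*z) - Real.cos φ := by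
    intro z hz
    have hz' := hsub hz
    have := Real.cos_lt_cos_of_nonneg_of_le_pi (by linarith [hz'.1] : (0:ℝ) ≤ 2*z) hφπ
      (by linarith [hz'.2])
    linarith
  have hWpos : ∀ z ∈ Set.Ioo A B, 0 < Wf m φ z := by
    intro z hz
    exact div_pos (mul_pos (hD z hz) (pow_two_pos_of_ne_zero (hQ z hz)))
      (pow_two_pos_of_ne_zero (hC z hz).ne')
  have hderiv : ∀ z ∈ Set.Ioo A B, HasDerivAt (Wf m φ) (Wf m φ z * psiF m φ z) z :=
    fun z hz => Wf_hasDeriv m φ z (hC z hz).ne' (hQ z hz) (hD z hz).ne'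
  have hnb : Set.Ioo (0:ℝ) (φ/2) ∈ 𝓝 x₀ := isOpen_Ioo.mem_nhds hx₀
  have hmin' : ∀ᶠ x in 𝓝 x₀, Wf m φ x₀ ≤ Wf m φ x := by
    rw [show (𝓝 x₀) = 𝓝[Set.Ioo (0:ℝ) (φ/2)] x₀ from (nhdsWithin_eq_nhds.mpr hnb).symm]
    exact hmin
  rcases le_or_gt (psiF m φ x₀) 0 with hψ | hψ
  · -- W strictly decreasing on [x₀, B)
    have hIco : Set.Ico x₀ B ⊆ Set.Ioo A B := fun z hz => ⟨lt_of_lt_of_le hx₀AB.1 hz.1, hz.2⟩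
    have hWanti : StrictAntiOn (Wf m φ) (Set.Ico x₀ B) := by
      apply strictAntiOn_of_deriv_neg (convex_Ico _ _)
      · exact fun z hz => (hderiv z (hIco hz)).continuousAt.continuousWithinAt
      · intro z hz
        rw [interior_Ico] at hz
        have hz' : z ∈ Set.Ioo A B := ⟨lt_of_lt_of_le hx₀AB.1 hz.1.le, hz.2⟩
        rw [(hderiv z hz').deriv]
        have : psiF m φ z < psiF m φ x₀ :=
          psiF_anti m φ hm0 hφπ n hA0 hBφ hbranch hx₀AB hz' hz.1
        exact mul_neg_of_pos_of_neg (hWpos z hz') (by linarith)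
    have hIooB : Set.Ioo x₀ B ∈ 𝓝[>] x₀ := Ioo_mem_nhdsGT_of_mem ⟨le_refl x₀, hx₀AB.2⟩
    obtain ⟨y, hy1, hy2⟩ :=
      ((hmin'.filter_mono nhdsWithin_le_nhds).and (eventually_of_mem hIooB fun y hy => hy)).exists
    have : Wf m φ y < Wf m φ x₀ :=
      hWanti ⟨le_refl x₀, hx₀AB.2⟩ ⟨hy2.1.le, hy2.2⟩ hy2.1
    linarith
  · -- W strictly increasing on (A, x₀]
    have hIoc : Set.Ioc A x₀ ⊆ Set.Ioo A B := fun z hz => ⟨hz.1, lt_of_le_of_lt hz.2 hx₀AB.2⟩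
    have hWmono : StrictMonoOn (Wf m φ) (Set.Ioc A x₀) := by
      apply strictMonoOn_of_deriv_pos (convex_Ioc _ _)
      · exact fun z hz => (hderiv z (hIoc hz)).continuousAt.continuousWithinAt
      · intro z hz
        rw [interior_Ioc] at hz
        have hz' : z ∈ Set.Ioo A B := ⟨hz.1, hz.2.trans hx₀AB.2⟩
        rw [(hderiv z hz').deriv]
        have : psiF m φ x₀ < psiF m φ z :=
          psiF_anti m φ hm0 hφπ n hA0 hBφ hbranch hz' hx₀AB hz.2
        exact mul_pos (hWpos z hz') (by linarith)
    have hIooA : Set.Ioo A x₀ ∈ 𝓝[<] x₀ := Ioo_mem_nhdsLT_of_mem ⟨hx₀AB.1, le_refl x₀⟩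
    obtain ⟨y, hy1, hy2⟩ :=
      ((hmin'.filter_mono nhdsWithin_le_nhds).and (eventually_of_mem hIooA fun y hy => hy)).exists
    have : Wf m φ y < Wf m φ x₀ :=
      hWmono ⟨hy2.1, hy2.2.le⟩ ⟨hx₀AB.1, le_refl x₀⟩ hy2.2
    linarith

lemma grovP_eq (k : ℕ) {φ lam : ℝ} (hφ0 : 0 < φ) (hφπ : φ ≤ π) (h0 : 0 < lam) (h1 : lam < 1) :
    grovP k φ lam = 1 - (1 - lam) *
      (1 + Real.cos ((2 * (k:ℝ) + 1) * Real.arccos (1 - lam * (1 - Real.cos φ)))) /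
      (1 + (1 - lam * (1 - Real.cos φ))) := by
  have hf1 : Real.cos φ < 1 := by
    have := Real.cos_lt_cos_of_nonneg_of_le_pi (le_refl 0) hφπ hφ0
    simpa using this
  have hfm : -1 ≤ Real.cos φ := Real.neg_one_le_cos φ
  have hc1 : -1 < 1 - lam * (1 - Real.cos φ) := by nlinarith
  have hc2 : 1 - lam * (1 - Real.cos φ) < 1 := by nlinarith
  unfold grovP
  simp only
  rw [Real.sin_arcsin (by linarith [Real.sqrt_nonneg lam]) (by
        rw [show (1:ℝ) = Real.sqrt 1 by simp]
        exact Real.sqrt_le_sqrt h1.le),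
      Real.sq_sqrt h0.le, Real.sin_sq, Real.cos_arccos hc1.le hc2.le]
  have hd1 : 1 - (1 - lam * (1 - Real.cos φ)) ^ 2 ≠ 0 := by nlinarith
  have hd2 : 1 + (1 - lam * (1 - Real.cos φ)) ≠ 0 := by nlinarith
  field_simp
  ring

end GroverAux

set_option maxHeartbeats 1000000

/-- For k ≥ 1 and φ ∈ (0,π], a point λ₀ ∈ (0,1) is a local maximum
point of λ ↦ P_k^φ(λ) on (0,1) iff λ₀ = (1 − cos((2j−1)π/(2k+1)))/(1 − cos φ)
for some integer j with 1 ≤ j ≤ k. -/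
theorem local_maximum_points_characterization
    (k : ℕ) (hk : 1 ≤ k) (φ : ℝ) (hφ : φ ∈ Set.Ioc 0 Real.pi)
    (lam₀ : ℝ) (hlam₀ : lam₀ ∈ Set.Ioo (0 : ℝ) 1) :
    IsLocalMaxOn (grovP k φ) (Set.Ioo (0 : ℝ) 1) lam₀ ↔
      ∃ j : ℕ, 1 ≤ j ∧ j ≤ k ∧
        lam₀ = (1 - Real.cos ((2 * (j : ℝ) - 1) * Real.pi / (2 * (k : ℝ) + 1))) /
          (1 - Real.cos φ) := by
  obtain ⟨hφ0, hφπ⟩ := hφ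
  obtain ⟨hl0, hl1⟩ := hlam₀
  have hπ := Real.pi_pos
  have hf1 : Real.cos φ < 1 := by
    have := Real.cos_lt_cos_of_nonneg_of_le_pi (le_refl 0) hφπ hφ0
    simpa using this
  have hfm : -1 ≤ Real.cos φ := Real.neg_one_le_cos φ
  have h1f : 0 < 1 - Real.cos φ := by linarith
  have hk1 : (1:ℝ) ≤ (k:ℝ) := by exact_mod_cast hk
  have hm1 : (1:ℝ) ≤ 2*(k:ℝ)+1 := by linarith
  constructor
  · -- hard direction
    intro h
    set c₀ : ℝ := 1 - lam₀ * (1 - Real.cos φ) with hc₀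
    have hc1 : -1 < c₀ := by nlinarith
    have hc2 : c₀ < 1 := by nlinarith
    set δ₀ : ℝ := Real.arccos c₀ with hδ₀def
    have hδ0 : 0 < δ₀ := Real.arccos_pos.mpr hc2
    have hcosδ : Real.cos δ₀ = c₀ := Real.cos_arccos hc1.le hc2.le
    have hδπ : δ₀ ≤ π := Real.arccos_le_pi c₀
    have hδφ : δ₀ < φ := by
      rcases lt_or_ge δ₀ φ with h' | h'
      · exact h'
      · exfalso
        have hge : Real.cos δ₀ ≤ Real.cos φ := by
          rcases eq_or_lt_of_le h' with he | hlt
          · rw [he]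
          · have := Real.cos_lt_cos_of_nonneg_of_le_pi hφ0.le hδπ hlt
            linarith
        have : Real.cos φ < c₀ := by nlinarith
        linarith
    set x₀ : ℝ := δ₀ / 2 with hx₀def
    have hx₀mem : x₀ ∈ Set.Ioo (0:ℝ) (φ/2) := ⟨by linarith, by linarith⟩
    set m : ℝ := 2*(k:ℝ)+1 with hmdef
    set cmap : ℝ → ℝ := fun x => (1 - Real.cos (2*x))/(1 - Real.cos φ) with hcmap
    have hmapsto : Set.MapsTo cmap (Set.Ioo (0:ℝ) (φ/2)) (Set.Ioo (0:ℝ) 1) := by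
      intro x hx
      have hlt1 : Real.cos (2*x) < 1 := by
        have := Real.cos_lt_cos_of_nonneg_of_le_pi (le_refl 0)
          (by linarith [hx.2] : 2*x ≤ π) (by linarith [hx.1])
        simpa using this
      have hgt : Real.cos φ < Real.cos (2*x) :=
        Real.cos_lt_cos_of_nonneg_of_le_pi (by linarith [hx.1]) hφπ (by linarith [hx.2])
      exact ⟨div_pos (by linarith) h1f, (div_lt_one h1f).mpr (by linarith)⟩
    have hcx₀ : cmap x₀ = lam₀ := by
      simp only [hcmap]
      rw [show 2*x₀ = δ₀ by rw [hx₀def]; ring, hcosδ, hc₀]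
      field_simp
      ring
    have key : ∀ x ∈ Set.Ioo (0:ℝ) (φ/2),
        grovP k φ (cmap x) = 1 - Wf m φ x / (1 - Real.cos φ) := by
      intro x hx
      have hcm := hmapsto hx
      rw [grovP_eq k hφ0 hφπ hcm.1 hcm.2]
      have harg : 1 - cmap x * (1 - Real.cos φ) = Real.cos (2*x) := by
        simp only [hcmap]; field_simp; ring
      have harc : Real.arccos (1 - cmap x * (1 - Real.cos φ)) = 2*x := by
        rw [harg]; exact Real.arccos_cos (by linarith [hx.1]) (by linarith [hx.2])
      rw [harc]
      have hcx : 0 < Real.cos x := Real.cos_pos_of_mem_Ioo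
        ⟨by linarith [hx.1], by linarith [hx.2]⟩
      have e1 : Real.cos ((2*(k:ℝ)+1) * (2*x)) = 2*Real.cos (m*x)^2 - 1 := by
        rw [show (2*(k:ℝ)+1) * (2*x) = 2*(m*x) by rw [hmdef]; ring, Real.cos_two_mul]
      have e2 : Real.cos (2*x) = 2*Real.cos x^2 - 1 := Real.cos_two_mul x
      simp only [hcmap, Wf]
      rw [e1, e2]
      field_simp
      ring
    -- transfer local max to local min of Wf
    have hW : IsLocalMinOn (Wf m φ) (Set.Ioo (0:ℝ) (φ/2)) x₀ := by
      have hcont : ContinuousWithinAt cmap (Set.Ioo (0:ℝ) (φ/2)) x₀ := by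
        apply Continuous.continuousWithinAt
        rw [hcmap]
        exact (continuous_const.sub (Real.continuous_cos.comp
          (continuous_const.mul continuous_id))).div_const _
      have htends : Tendsto cmap (𝓝[Set.Ioo (0:ℝ) (φ/2)] x₀) (𝓝[Set.Ioo (0:ℝ) 1] lam₀) := by
        have := hcont.tendsto_nhdsWithin hmapsto
        rwa [hcx₀] at this
      have hev : ∀ᶠ x in 𝓝[Set.Ioo (0:ℝ) (φ/2)] x₀,
          grovP k φ (cmap x) ≤ grovP k φ lam₀ := htends.eventually h
      filter_upwards [hev, self_mem_nhdsWithin] with x hx1 hx2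
      rw [key x hx2, show grovP k φ lam₀ = 1 - Wf m φ x₀ / (1 - Real.cos φ) by
        rw [← hcx₀]; exact key x₀ hx₀mem] at hx1
      have hle : (0:ℝ) ≤ (Wf m φ x - Wf m φ x₀) / (1 - Real.cos φ) := by
        rw [← div_sub_div_same]
        linarith
      have hmul := mul_nonneg hle h1f.le
      rw [div_mul_cancel₀ _ h1f.ne'] at hmul
      linarith
    have hQ0 : Real.cos (m*x₀) = 0 := by
      by_contra hq
      exact core m φ hm1 hφ0 hφπ hx₀mem hq hW
    obtain ⟨n, hn⟩ := Real.cos_eq_zero_iff.mp hQ0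
    have hm0 : (0:ℝ) < m := by linarith
    have hδeq : δ₀ = (2*(n:ℝ)+1)*π/m := by
      have : m * x₀ = (2*(n:ℝ)+1)*π/2 := hn
      rw [hx₀def] at this
      field_simp at this ⊢
      linarith
    have hn0 : 0 ≤ n := by
      by_contra hneg
      push_neg at hneg
      have hn1 : n ≤ -1 := by omega
      have hn1' : (n:ℝ) ≤ -1 := by exact_mod_cast hn1
      have hlt : (2*(n:ℝ)+1)*π/m < 0 := div_neg_of_neg_of_pos (by nlinarith) hm0
      rw [← hδeq] at hlt
      linarith
    have hnk : (n:ℝ) < (k:ℝ) := by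
      have : (2*(n:ℝ)+1)*π/m < π := by rw [← hδeq]; linarith
      rw [div_lt_iff₀ hm0] at this
      nlinarith
    obtain ⟨j', rfl⟩ := Int.eq_ofNat_of_zero_le hn0
    have hj'k : j' < k := by exact_mod_cast hnk
    refine ⟨j' + 1, Nat.le_add_left 1 _, by omega, ?_⟩
    have hcast : (2*((j' + 1 : ℕ):ℝ) - 1) = 2*((j':ℤ):ℝ)+1 := by push_cast; ring
    rw [hcast, ← hδeq, hcosδ, hc₀]
    field_simp
    ring
  · -- easy direction
    rintro ⟨j, hj1, hjk, hlam⟩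
    have hj1' : (1:ℝ) ≤ (j:ℝ) := by exact_mod_cast hj1
    have hjk' : (j:ℝ) ≤ (k:ℝ) := by exact_mod_cast hjk
    set δ₀ : ℝ := (2*(j:ℝ)-1)*π/(2*(k:ℝ)+1) with hδdef
    have hδ0 : 0 < δ₀ := by
      rw [hδdef]
      exact div_pos (mul_pos (by linarith) hπ) (by linarith)
    have hδπ : δ₀ ≤ π := by
      rw [hδdef, div_le_iff₀ (by linarith : (0:ℝ) < 2*(k:ℝ)+1)]
      have h2jk : (2*(j:ℝ)-1) ≤ (2*(k:ℝ)+1) := by linarith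
      have := mul_le_mul_of_nonneg_right h2jk hπ.le
      linarith
    have hcδ : 1 - lam₀ * (1 - Real.cos φ) = Real.cos δ₀ := by
      rw [hlam]; field_simp; ring
    have harc : Real.arccos (1 - lam₀ * (1 - Real.cos φ)) = δ₀ := by
      rw [hcδ]; exact Real.arccos_cos hδ0.le hδπ
    have hcos1 : Real.cos ((2*(k:ℝ)+1) * δ₀) = -1 := by
      have he : (2*(k:ℝ)+1) * δ₀ = (((j:ℤ)-1 : ℤ):ℝ)*(2*π)+π := by
        rw [hδdef]
        push_cast
        field_simp
        ring
      rw [he, Real.cos_int_mul_two_pi_add_pi]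
    show ∀ᶠ lam in 𝓝[Set.Ioo (0:ℝ) 1] lam₀, grovP k φ lam ≤ grovP k φ lam₀
    filter_upwards [self_mem_nhdsWithin] with lam hlam'
    rw [grovP_eq k hφ0 hφπ hlam'.1 hlam'.2, grovP_eq k hφ0 hφπ hl0 hl1, harc, hcos1]
    have hc1 : -1 < 1 - lam * (1 - Real.cos φ) := by nlinarith [hlam'.1, hlam'.2]
    have hc2 : 1 - lam * (1 - Real.cos φ) < 1 := by nlinarith [hlam'.1, hlam'.2]
    have hnum : 0 ≤ (1 - lam) * (1 + Real.cos ((2*(k:ℝ)+1) *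
        Real.arccos (1 - lam * (1 - Real.cos φ)))) := by
      have hcb := Real.neg_one_le_cos ((2*(k:ℝ)+1) * Real.arccos (1 - lam * (1 - Real.cos φ)))
      exact mul_nonneg (by linarith [hlam'.2]) (by linarith)
    have : 0 ≤ (1 - lam) * (1 + Real.cos ((2*(k:ℝ)+1) *
        Real.arccos (1 - lam * (1 - Real.cos φ)))) / (1 + (1 - lam * (1 - Real.cos φ))) :=
      div_nonneg hnum (by linarith)
    have hz : (1 - lam₀) * (1 + -1) / (1 + (1 - lam₀ * (1 - Real.cos φ))) = 0 := by ring_nf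
    linarith [hz ▸ le_refl (0:ℝ)]
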